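/- arXiv:2101.01982 — 4 statements merged into one kernel-verified Lean document; each statement's English description precedes it below -/
import Mathlib

section
/- Let 0 < c ≤ 2/5. For every irrational x ∈ [c,1] and every ω ∈ {0,1}^ℕ there exists n ≥ 0 such that T_ω^n(x) ∈ S. -/
open MeasureTheory Filter Set
open scoped Classical ENNReal

noncomputable section

/-- The Lüroth map `T_L`. -/
def TL (x : ℝ) : ℝ :=
  if x = 0 then 0
  else if x = 1 then 1
  else (⌈1/x⌉ : ℝ) * ((⌈1/x⌉ : ℝ) - 1) * x - ((⌈1/x⌉ : ℝ) - 1)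

/-- The alternating Lüroth map `T_A`. -/
def TA (x : ℝ) : ℝ := 1 - TL x

/-- `z_n⁺ = z_n + c·z_n·z_{n-1}`. -/
def zp (c : ℝ) (n : ℕ) : ℝ := 1/(n:ℝ) + c * (1/(n:ℝ)) * (1/((n:ℝ) - 1))

/-- `z_n⁻ = z_n − c·z_n·z_{n+1}`. -/
def zm (c : ℝ) (n : ℕ) : ℝ := 1/(n:ℝ) - c * (1/(n:ℝ)) * (1/((n:ℝ) + 1))

/-- The maps `T_{0,c}` (`j = false`) and `T_{1,c}` (`j = true`); for `c = 0` the points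
`0` and `z_n`, `n ≥ 2`, are additionally sent to `1`. -/
def Tc (j : Bool) (c : ℝ) (x : ℝ) : ℝ :=
  if c = 0 ∧ (x = 0 ∨ ∃ n : ℕ, 2 ≤ n ∧ x = 1/(n:ℝ)) then 1
  else if x = 1 then 1
  else if (j = false ∧ ∃ n : ℕ, 2 ≤ n ∧ 1/(n:ℝ) ≤ x ∧ x < zp c n) ∨
          (j = true ∧ ∃ n : ℕ, 2 ≤ n ∧ 1/(n:ℝ) ≤ x ∧ x ≤ zm c (n-1)) then TA x
  else TL x

/-- Random iteration: `Tom c ω n = T_{ω_n,c} ∘ ⋯ ∘ T_{ω_1,c}` (paths 0-indexed). -/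
def Tom (c : ℝ) (ω : ℕ → Bool) : ℕ → ℝ → ℝ
  | 0 => fun x => x
  | n+1 => fun x => Tc (ω n) c (Tom c ω n x)

/-- The digit `d_{n+1}(ω,x)` (0-indexed: `dig c ω x n` is the digit determined by `T_ω^n x`). -/
def dig (c : ℝ) (ω : ℕ → Bool) (x : ℝ) (n : ℕ) : ℕ :=
  if Tom c ω n x = 1 then 2 else (⌈1/(Tom c ω n x)⌉).toNat

/-- The switch region `S = [c,1] ∩ ⋃_{n≥2} [z_n⁺, z_{n-1}⁻]`. -/
def SwitchS (c : ℝ) : Set ℝ :=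
  {y | y ∈ Set.Icc c 1 ∧ ∃ n : ℕ, 2 ≤ n ∧ zp c n ≤ y ∧ y ≤ zm c (n-1)}

/-- The sign `s_{n+1}(ω,x)` (0-indexed: `sgn c ω x n` is the sign determined by `T_ω^n x`). -/
def sgn (c : ℝ) (ω : ℕ → Bool) (x : ℝ) (n : ℕ) : ℕ :=
  if c = 0 then (if ω n then 1 else 0)
  else if (ω n = false ∧ Tom c ω n x ∈ SwitchS c) ∨
          (∃ d : ℕ, 1 ≤ d ∧ zm c d < Tom c ω n x ∧ Tom c ω n x < 1/(d:ℝ)) ∨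
          Tom c ω n x = 1 then 0
  else 1

/-- The c-Lüroth expansion: `expansion c ω x n = (s_{n+1}(ω,x), d_{n+1}(ω,x))`. -/
def expansion (c : ℝ) (ω : ℕ → Bool) (x : ℝ) (n : ℕ) : ℕ × ℕ :=
  (sgn c ω x n, dig c ω x n)

/-- A sequence is ultimately periodic if some tail is periodic. -/
def UltimatelyPeriodic {α : Type*} (a : ℕ → α) : Prop :=
  ∃ N r : ℕ, 1 ≤ r ∧ ∀ n, N ≤ n → a (n + r) = a n

/-- The `n`-th convergent `p_n/q_n(ω,x)`. -/
def conv (c : ℝ) (ω : ℕ → Bool) (x : ℝ) (n : ℕ) : ℝ :=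
  ∑ k ∈ Finset.range n,
    (-1 : ℝ) ^ (∑ i ∈ Finset.range k, sgn c ω x i) *
      ((dig c ω x k : ℝ) - 1 + (sgn c ω x k : ℝ)) /
      (∏ i ∈ Finset.range (k+1), ((dig c ω x i : ℝ) * ((dig c ω x i : ℝ) - 1)))

/-- The value `Σ_{n≥1} (−1)^{s_1+⋯+s_{n−1}} (d_n − 1 + s_n)/∏_{i≤n} d_i(d_i−1)` of a
sign-digit sequence (0-indexed). -/
def lurothSum (a : ℕ → ℕ × ℕ) : ℝ :=
  ∑' n : ℕ,
    (-1 : ℝ) ^ (∑ i ∈ Finset.range n, (a i).1) *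
      (((a n).2 : ℝ) - 1 + ((a n).1 : ℝ)) /
      (∏ i ∈ Finset.range (n+1), (((a i).2 : ℝ) * (((a i).2 : ℝ) - 1)))

/-- The Bernoulli `(p, 1-p)` product measure on `{0,1}^ℕ` (coordinate `0 ↔ false` has
probability `p`). -/
def IsBernoulli (p : ℝ) (m : Measure (ℕ → Bool)) : Prop :=
  IsProbabilityMeasure m ∧
  ∀ (n : ℕ) (f : Fin n → Bool),
    m {ω : ℕ → Bool | ∀ i : Fin n, ω i = f i} =
      ∏ i : Fin n, ENNReal.ofReal (if f i then 1 - p else p)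

/-- The random 0-Lüroth transformation `L_0`. -/
def L0 (q : (ℕ → Bool) × ℝ) : (ℕ → Bool) × ℝ := (fun n => q.1 (n+1), Tc (q.1 0) 0 q.2)

/-- The `n`-th approximation coefficient `θ_n(ω,x)` (1-indexed `n`). -/
def theta (ω : ℕ → Bool) (x : ℝ) (n : ℕ) : ℝ :=
  ((dig 0 ω x (n-1) : ℝ) - (sgn 0 ω x (n-1) : ℝ)) *
    (∏ i ∈ Finset.range (n-1), ((dig 0 ω x i : ℝ) * ((dig 0 ω x i : ℝ) - 1))) *
    |x - conv 0 ω x n|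

/-- Distribution function `F_L` of the Lüroth approximation coefficients. -/
def FL (y : ℝ) : ℝ := (∑ k ∈ Finset.Icc 2 (⌊1/y⌋₊ + 1), y / (k:ℝ)) + 1/((⌊1/y⌋₊ : ℝ) + 1)

/-- Distribution function `F_A` of the alternating Lüroth approximation coefficients. -/
def FA (y : ℝ) : ℝ := (∑ k ∈ Finset.Icc 2 ⌊1/y⌋₊, y / ((k:ℝ) - 1)) + 1/(⌊1/y⌋₊ : ℝ)

/-- A sequence over the alphabet `A` is universal if every finite word over `A` occurs
in it as a consecutive block. -/
def IsUniversal (A : Set (ℕ × ℕ)) (e : ℕ → ℕ × ℕ) : Prop :=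
  ∀ (m : ℕ) (w : Fin m → ℕ × ℕ), (∀ i, w i ∈ A) →
    ∃ k : ℕ, ∀ i : Fin m, e (k + (i : ℕ)) = w i

/-- `c`-Lüroth admissible sequences. -/
def Admissible (c : ℝ) (a : ℕ → ℕ × ℕ) : Prop :=
  (∀ n, (a n).1 ≤ 1 ∧ 2 ≤ (a n).2 ∧ (a n).2 ≤ ⌈1/c⌉₊) ∧
  (∀ k : ℕ, lurothSum (fun n => a (k + n)) ∈ Set.Icc c 1) ∧
  ¬ ∃ (N d : ℕ), 2 ≤ d ∧ d < ⌈1/c⌉₊ ∧ a N = (0, d+1) ∧ ∀ n, N < n → a n = (0, 2)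

-- helper lemmas

lemma cast_pred (n : ℕ) (hn : 2 ≤ n) : ((n-1 : ℕ):ℝ) = (n:ℝ) - 1 := by
  rw [Nat.cast_sub (by omega), Nat.cast_one]

lemma zm_pred_eq (c : ℝ) (n : ℕ) (hn : 2 ≤ n) :
    zm c (n-1) = 1/((n:ℝ)-1) - c * (1/((n:ℝ)-1)) * (1/(n:ℝ)) := by
  rw [zm, cast_pred n hn]; ring_nf

lemma zp_le_zm (c : ℝ) (hc0 : 0 ≤ c) (hc : c ≤ 1/2) (n : ℕ) (hn : 2 ≤ n) :
    zp c n ≤ zm c (n-1) := by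
  have hN : (2:ℝ) ≤ (n:ℝ) := by exact_mod_cast hn
  have h1 : (0:ℝ) < (n:ℝ) - 1 := by linarith
  have h0 : (0:ℝ) < (n:ℝ) := by linarith
  rw [zp, zm_pred_eq c n hn]
  have key : 1/((n:ℝ)-1) - c*(1/((n:ℝ)-1))*(1/(n:ℝ))
      - (1/(n:ℝ) + c * (1/(n:ℝ)) * (1/((n:ℝ) - 1))) = (1-2*c)/((n:ℝ)*((n:ℝ)-1)) := by
    field_simp
    ring
  have pos : 0 ≤ (1-2*c)/((n:ℝ)*((n:ℝ)-1)) := div_nonneg (by linarith) (by positivity)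
  linarith

lemma zp_le (c : ℝ) (hc0 : 0 ≤ c) (hc : c ≤ 1) (n : ℕ) (hn : 2 ≤ n) :
    zp c n ≤ 1/((n:ℝ)-1) := by
  have hN : (2:ℝ) ≤ (n:ℝ) := by exact_mod_cast hn
  have h1 : (0:ℝ) < (n:ℝ) - 1 := by linarith
  have h0 : (0:ℝ) < (n:ℝ) := by linarith
  rw [zp]
  have key : 1/((n:ℝ)-1) - (1/(n:ℝ) + c * (1/(n:ℝ)) * (1/((n:ℝ) - 1)))
      = (1-c)/((n:ℝ)*((n:ℝ)-1)) := by field_simp; ring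
  have pos : 0 ≤ (1-c)/((n:ℝ)*((n:ℝ)-1)) := div_nonneg (by linarith) (by positivity)
  linarith

lemma zm_le (c : ℝ) (hc0 : 0 ≤ c) (n : ℕ) (hn : 2 ≤ n) :
    zm c (n-1) ≤ 1/((n:ℝ)-1) := by
  have hN : (2:ℝ) ≤ (n:ℝ) := by exact_mod_cast hn
  have h1 : (0:ℝ) < (n:ℝ) - 1 := by linarith
  have h0 : (0:ℝ) < (n:ℝ) := by linarith
  rw [zm_pred_eq c n hn]
  have pos : 0 ≤ c*(1/((n:ℝ)-1))*(1/(n:ℝ)) := by positivity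
  linarith

lemma inv_le_zm (c : ℝ) (hc0 : 0 ≤ c) (hc : c ≤ 1) (n : ℕ) (hn : 2 ≤ n) :
    1/(n:ℝ) ≤ zm c (n-1) := by
  have hN : (2:ℝ) ≤ (n:ℝ) := by exact_mod_cast hn
  have h1 : (0:ℝ) < (n:ℝ) - 1 := by linarith
  have h0 : (0:ℝ) < (n:ℝ) := by linarith
  rw [zm_pred_eq c n hn]
  have key : 1/((n:ℝ)-1) - c*(1/((n:ℝ)-1))*(1/(n:ℝ)) - 1/(n:ℝ)
      = (1-c)/((n:ℝ)*((n:ℝ)-1)) := by field_simp; ring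
  have pos : 0 ≤ (1-c)/((n:ℝ)*((n:ℝ)-1)) := div_nonneg (by linarith) (by positivity)
  linarith

lemma TL_eq (d : ℕ) (hd : 2 ≤ d) (y : ℝ) (h1 : 1/(d:ℝ) < y) (h2 : y < 1/((d:ℝ)-1)) :
    TL y = (d:ℝ)*((d:ℝ)-1)*y - ((d:ℝ)-1) := by
  have hD : (2:ℝ) ≤ (d:ℝ) := by exact_mod_cast hd
  have hD1 : (0:ℝ) < (d:ℝ) - 1 := by linarith
  have hD0 : (0:ℝ) < (d:ℝ) := by linarith
  have hy0 : 0 < y := lt_trans (by positivity) h1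
  have hy1 : y < 1 := lt_of_lt_of_le h2 (by
    rw [div_le_one hD1]; linarith)
  have hceil : ⌈1/y⌉ = (d:ℤ) := by
    have hub : 1/y < (d:ℝ) := by
      rw [div_lt_iff₀ hy0]
      calc (1:ℝ) = (d:ℝ) * (1/(d:ℝ)) := by field_simp
      _ < (d:ℝ) * y := by exact mul_lt_mul_of_pos_left h1 hD0
    have hlb : (d:ℝ) - 1 < 1/y := by
      rw [lt_div_iff₀ hy0]
      calc ((d:ℝ)-1) * y < ((d:ℝ)-1) * (1/((d:ℝ)-1)) := mul_lt_mul_of_pos_left h2 hD1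
      _ = 1 := by field_simp
    rw [Int.ceil_eq_iff]
    constructor
    · push_cast; linarith
    · push_cast; linarith
  rw [TL, if_neg (ne_of_gt hy0), if_neg (ne_of_lt hy1), hceil]
  push_cast
  ring

lemma Tc_pos (c : ℝ) (hc0 : 0 < c) (hc : c ≤ 2/5) (j : Bool) (d : ℕ) (hd : 2 ≤ d)
    (y : ℝ) (h1 : 1/(d:ℝ) < y) (h2 : y < zp c d) (hy1 : y ≠ 1) :
    Tc j c y = (d:ℝ) - (d:ℝ)*((d:ℝ)-1)*y := by
  have hD : (2:ℝ) ≤ (d:ℝ) := by exact_mod_cast hd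
  have hD1 : (0:ℝ) < (d:ℝ) - 1 := by linarith
  have hzp : zp c d ≤ 1/((d:ℝ)-1) := zp_le c hc0.le (by linarith) d hd
  have h2' : y < 1/((d:ℝ)-1) := lt_of_lt_of_le h2 hzp
  have hcond : (j = false ∧ ∃ n : ℕ, 2 ≤ n ∧ 1/(n:ℝ) ≤ y ∧ y < zp c n) ∨
      (j = true ∧ ∃ n : ℕ, 2 ≤ n ∧ 1/(n:ℝ) ≤ y ∧ y ≤ zm c (n-1)) := by
    cases j with
    | false => exact Or.inl ⟨rfl, d, hd, h1.le, h2⟩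
    | true => exact Or.inr ⟨rfl, d, hd, h1.le,
        h2.le.trans (zp_le_zm c hc0.le (by linarith) d hd)⟩
  rw [Tc, if_neg (fun h => hc0.ne' h.1), if_neg hy1, if_pos hcond, TA,
    TL_eq d hd y h1 h2']
  ring

lemma Tc_neg (c : ℝ) (hc0 : 0 < c) (hc : c ≤ 2/5) (j : Bool) (d : ℕ) (hd : 2 ≤ d)
    (y : ℝ) (h1 : zm c (d-1) < y) (h2 : y < 1/((d:ℝ)-1)) :
    Tc j c y = (d:ℝ)*((d:ℝ)-1)*y - ((d:ℝ)-1) := by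
  have hD : (2:ℝ) ≤ (d:ℝ) := by exact_mod_cast hd
  have hD1 : (0:ℝ) < (d:ℝ) - 1 := by linarith
  have hD0 : (0:ℝ) < (d:ℝ) := by linarith
  have h1' : 1/(d:ℝ) < y := lt_of_le_of_lt (inv_le_zm c hc0.le (by linarith) d hd) h1
  have hy1 : y ≠ 1 := ne_of_lt (lt_of_lt_of_le h2 (by
    rw [div_le_one hD1]; linarith))
  have hcond : ¬((j = false ∧ ∃ n : ℕ, 2 ≤ n ∧ 1/(n:ℝ) ≤ y ∧ y < zp c n) ∨
      (j = true ∧ ∃ n : ℕ, 2 ≤ n ∧ 1/(n:ℝ) ≤ y ∧ y ≤ zm c (n-1))) := by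
    have bound : ∀ n : ℕ, 2 ≤ n → 1/(n:ℝ) ≤ y → zm c (d-1) ≥ zm c (n-1) ∧ zm c (d-1) ≥ zp c n ∨ n = d := by
      intro n hn2 hny
      have hN : (2:ℝ) ≤ (n:ℝ) := by exact_mod_cast hn2
      have hN0 : (0:ℝ) < (n:ℝ) := by linarith
      have hdn : d ≤ n := by
        have : 1/(n:ℝ) < 1/((d:ℝ)-1) := lt_of_le_of_lt hny h2
        have h3 : (d:ℝ) - 1 < (n:ℝ) := by
          by_contra hcon
          push_neg at hcon
          exact absurd this (not_lt.mpr (one_div_le_one_div_of_le hN0 hcon))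
        have : d < n + 1 := by exact_mod_cast (by linarith : (d:ℝ) < (n:ℝ)+1)
        omega
      rcases eq_or_lt_of_le hdn with heq | hlt
      · exact Or.inr heq.symm
      · left
        have hNd : (d:ℝ) ≤ (n:ℝ) - 1 := by
          have : (d:ℝ) + 1 ≤ (n:ℝ) := by exact_mod_cast hlt
          linarith
        have key : 1/((n:ℝ)-1) ≤ 1/(d:ℝ) := by
          apply one_div_le_one_div_of_le hD0 hNd
        have hh : 1/(d:ℝ) ≤ zm c (d-1) := inv_le_zm c hc0.le (by linarith) d hd
        constructor
        · exact le_trans (le_trans (zm_le c hc0.le n hn2) key) hh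
        · exact le_trans (le_trans (zp_le c hc0.le (by linarith) n hn2) key) hh
    rintro (⟨-, n, hn2, hny, hlt⟩ | ⟨-, n, hn2, hny, hle⟩)
    · rcases bound n hn2 hny with ⟨-, hb⟩ | rfl
      · exact absurd hlt (not_lt.mpr (le_trans hb (le_of_lt h1)))
      · exact absurd hlt (not_lt.mpr
          (le_trans (zp_le_zm c hc0.le (by linarith) n hn2) h1.le))
    · rcases bound n hn2 hny with ⟨hb, -⟩ | rfl
      · exact absurd hle (not_le.mpr (lt_of_le_of_lt hb h1))
      · exact absurd hle (not_le.mpr h1)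
  rw [Tc, if_neg (fun h => hc0.ne' h.1), if_neg hy1, if_neg hcond,
    TL_eq d hd y h1' h2]

lemma step_lemma (c : ℝ) (hc0 : 0 < c) (hc : c ≤ 2/5) (j : Bool) (y : ℝ)
    (hy : y ∈ Icc c 1) (hyi : Irrational y) (hS : y ∉ SwitchS c) :
    Tc j c y ∈ Ioo (1-c) 1 ∧ Irrational (Tc j c y) := by
  have hy0 : 0 < y := lt_of_lt_of_le hc0 hy.1
  have hy1 : y ≠ 1 := by simpa using hyi.ne_int 1
  have hylt1 : y < 1 := lt_of_le_of_ne hy.2 hy1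
  have hinv : 1 < 1/y := by rw [lt_div_iff₀ hy0]; linarith
  have hDnn : 0 ≤ ⌈1/y⌉ := by positivity
  set d : ℕ := (⌈1/y⌉).toNat with hd
  have hdD : (d:ℤ) = ⌈1/y⌉ := Int.toNat_of_nonneg hDnn
  have hdr : (d:ℝ) = (⌈1/y⌉ : ℝ) := by exact_mod_cast congrArg (fun z : ℤ => (z:ℝ)) hdD
  have hd2 : 2 ≤ d := by
    have h2 : (1:ℤ) < ⌈1/y⌉ := Int.lt_ceil.mpr (by exact_mod_cast hinv)
    omega
  have hD : (2:ℝ) ≤ (d:ℝ) := by exact_mod_cast hd2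
  have hD1 : (0:ℝ) < (d:ℝ) - 1 := by linarith
  have hD0 : (0:ℝ) < (d:ℝ) := by linarith
  have h1 : 1/(d:ℝ) < y := by
    have hle : 1/y ≤ (d:ℝ) := hdr ▸ Int.le_ceil (1/y)
    have hne : 1/y ≠ (d:ℝ) := by
      intro h
      have : y = 1/(d:ℝ) := by field_simp at h ⊢; linarith
      rw [this] at hyi
      exact hyi ⟨(d:ℚ)⁻¹, by push_cast; rw [one_div]⟩
    have hlt : 1/y < (d:ℝ) := lt_of_le_of_ne hle hne
    rw [div_lt_iff₀ hy0] at hlt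
    rw [div_lt_iff₀ hD0]
    linarith
  have h2 : y < 1/((d:ℝ)-1) := by
    have := Int.ceil_lt_add_one (1/y)
    have hlt : (d:ℝ) - 1 < 1/y := by rw [hdr]; linarith
    rw [lt_div_iff₀ hy0] at hlt
    rw [lt_div_iff₀ hD1]
    linarith
  have hq1 : ((d:ℚ)*((d:ℚ)-1)) ≠ 0 := by
    have : (2:ℚ) ≤ (d:ℚ) := by exact_mod_cast hd2
    nlinarith
  have hdich : y < zp c d ∨ zm c (d-1) < y := by
    by_contra hcc
    push_neg at hcc
    exact hS ⟨hy, d, hd2, hcc.1, hcc.2⟩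
  have hmul : (0:ℝ) < (d:ℝ)*((d:ℝ)-1) := by positivity
  rcases hdich with hpos | hneg
  · have himg := Tc_pos c hc0 hc j d hd2 y h1 hpos hy1
    constructor
    · rw [himg]
      constructor
      · have key : (d:ℝ)*((d:ℝ)-1)*(zp c d) = ((d:ℝ)-1) + c := by
          rw [zp]; field_simp
        have := mul_lt_mul_of_pos_left hpos hmul
        rw [key] at this
        linarith
      · have h1' : (1:ℝ) < (d:ℝ)*y := by
          rw [div_lt_iff₀ hD0] at h1; linarith
        nlinarith
    · have himg2 : Tc j c y = ((d:ℚ):ℝ) + ((-(d*((d:ℚ)-1)):ℚ):ℝ) * y := by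
        rw [himg]; push_cast; ring
      rw [himg2]
      exact Irrational.ratCast_add _ (hyi.ratCast_mul (by simpa using hq1))
  · have himg := Tc_neg c hc0 hc j d hd2 y hneg h2
    constructor
    · rw [himg]
      constructor
      · have key : (d:ℝ)*((d:ℝ)-1)*(zm c (d-1)) = (d:ℝ) - c := by
          rw [zm_pred_eq c d hd2]; field_simp
        have := mul_lt_mul_of_pos_left hneg hmul
        rw [key] at this
        linarith
      · have key : (d:ℝ)*((d:ℝ)-1)*(1/((d:ℝ)-1)) = (d:ℝ) := by field_simp
        have := mul_lt_mul_of_pos_left h2 hmul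
        rw [key] at this
        linarith
    · obtain ⟨a, ha⟩ : ∃ a : ℚ, a = -((d:ℚ)-1) := ⟨_, rfl⟩
      obtain ⟨b, hb⟩ : ∃ b : ℚ, b = (d:ℚ)*((d:ℚ)-1) := ⟨_, rfl⟩
      have himg2 : Tc j c y = (a:ℝ) + (b:ℝ) * y := by
        rw [himg, ha, hb]; push_cast; ring
      rw [himg2]
      exact Irrational.ratCast_add a (hyi.ratCast_mul (by rw [hb]; exact hq1))

/-- for `0 < c ≤ 2/5` every random orbit of an irrational `x ∈ [c,1]`
enters the switch region. -/
theorem orbit_enters_switch_region (c : ℝ) (hc0 : 0 < c) (hc : c ≤ 2/5)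
    (x : ℝ) (hx : x ∈ Set.Icc c 1) (hxi : Irrational x) (ω : ℕ → Bool) :
    ∃ n : ℕ, Tom c ω n x ∈ SwitchS c := by
  by_contra hcon
  push_neg at hcon
  have hzp2 : zp c 2 = 1/2 + c/2 := by rw [zp]; norm_num; ring
  have hzm1 : zm c 1 = 1 - c/2 := by rw [zm]; norm_num; ring
  have key : ∀ n, Irrational (Tom c ω n x) ∧ Tom c ω n x ∈ Icc c 1 := by
    intro n
    induction n with
    | zero => exact ⟨hxi, hx⟩
    | succ n ih =>
      have hs := step_lemma c hc0 hc (ω n) _ ih.2 ih.1 (hcon n)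
      have hT : Tom c ω (n+1) x = Tc (ω n) c (Tom c ω n x) := rfl
      rw [hT]
      exact ⟨hs.2, ⟨by linarith [hs.1.1], hs.1.2.le⟩⟩
  have key2 : ∀ n, Tom c ω (n+1) x ∈ Ioo (1-c) 1 :=
    fun n => (step_lemma c hc0 hc (ω n) _ (key n).2 (key n).1 (hcon n)).1
  have dich : ∀ n, Tom c ω n x < zp c 2 ∨ zm c 1 < Tom c ω n x := by
    intro n
    by_contra hcc
    push_neg at hcc
    exact hcon n ⟨(key n).2, 2, le_refl 2, hcc.1, hcc.2⟩
  have expand2 : ∀ n, zm c 1 < Tom c ω n x → Tom c ω n x < 1 →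
      Tom c ω (n+1) x = 2 * Tom c ω n x - 1 := by
    intro n hlo hhi
    have h := Tc_neg c hc0 hc (ω n) 2 (le_refl 2) (Tom c ω n x)
      (by exact hlo) (by norm_num; exact hhi)
    show Tc (ω n) c (Tom c ω n x) = _
    rw [h]; norm_num
  have hL : ∃ m, Tom c ω (m+1) x ∈ Ioo (1-c) (zp c 2) := by
    by_contra hno
    push_neg at hno
    have hR : ∀ m, zm c 1 < Tom c ω (m+1) x := by
      intro m
      rcases dich (m+1) with h | h
      · exact absurd (⟨(key2 m).1, h⟩ : Tom c ω (m+1) x ∈ Ioo (1-c) (zp c 2)) (hno m)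
      · exact h
    have hrec : ∀ k, 1 - Tom c ω (k+1) x = 2^k * (1 - Tom c ω 1 x) := by
      intro k
      induction k with
      | zero => norm_num
      | succ k ih =>
        have h := expand2 (k+1) (hR k) (key2 k).2
        rw [h, pow_succ]
        linarith
    have hpos : 0 < 1 - Tom c ω 1 x := by linarith [(key2 0).2]
    obtain ⟨k, hk⟩ := pow_unbounded_of_one_lt (c / (1 - Tom c ω 1 x)) (one_lt_two (α := ℝ))
    rw [div_lt_iff₀ hpos] at hk
    have hb : 1 - Tom c ω (k+1) x < c := by linarith [(key2 k).1]
    rw [hrec k] at hb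
    linarith
  obtain ⟨m, hm⟩ := hL
  have expandA : ∀ n, Tom c ω (n+1) x ∈ Ioo (1-c) (zp c 2) →
      Tom c ω (n+2) x = 2 - 2 * Tom c ω (n+1) x ∧
        Tom c ω (n+2) x ∈ Ioo (1-c) (zp c 2) := by
    intro n hy
    have hy1 : Tom c ω (n+1) x ≠ 1 := by simpa using (key (n+1)).1.ne_int 1
    have h1 : 1/((2:ℕ):ℝ) < Tom c ω (n+1) x := by
      have := hy.1; norm_num; linarith
    have h := Tc_pos c hc0 hc (ω (n+1)) 2 (le_refl 2) (Tom c ω (n+1) x) h1 hy.2 hy1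
    have heq : Tom c ω (n+2) x = 2 - 2 * Tom c ω (n+1) x := by
      show Tc (ω (n+1)) c (Tom c ω (n+1) x) = _
      rw [h]; norm_num
    refine ⟨heq, ?_, ?_⟩
    · rw [heq]
      have := hy.2
      rw [hzp2] at this
      linarith
    · rcases dich (n+2) with h' | h'
      · exact h'
      · exfalso
        have hup : Tom c ω (n+2) x < 2*c := by
          rw [heq]; linarith [hy.1]
        rw [hzm1] at h'
        linarith
  have trap : ∀ k, Tom c ω (m+k+1) x ∈ Ioo (1-c) (zp c 2) := by
    intro k
    induction k with
    | zero => exact hm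
    | succ k ih => exact (expandA (m+k) ih).2
  have rel : ∀ k, Tom c ω (m+k+2) x = 2 - 2 * Tom c ω (m+k+1) x :=
    fun k => (expandA (m+k) (trap k)).1
  have dbl : ∀ k, |Tom c ω (m+k+1) x - 2/3| = 2^k * |Tom c ω (m+1) x - 2/3| := by
    intro k
    induction k with
    | zero => norm_num
    | succ k ih =>
      have h : Tom c ω (m+k+2) x - 2/3 = (-2) * (Tom c ω (m+k+1) x - 2/3) := by
        rw [rel k]; ring
      have : Tom c ω (m+(k+1)+1) x - 2/3 = (-2) * (Tom c ω (m+k+1) x - 2/3) := h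
      rw [this, abs_mul, ih, pow_succ]
      norm_num
      ring
  have hne : Tom c ω (m+1) x ≠ 2/3 := by
    intro h
    have := (key (m+1)).1
    rw [h] at this
    exact this ⟨2/3, by norm_num⟩
  have hpos : 0 < |Tom c ω (m+1) x - 2/3| := abs_pos.mpr (sub_ne_zero.mpr hne)
  have hbd : ∀ k, |Tom c ω (m+k+1) x - 2/3| < 1 := by
    intro k
    have h := trap k
    rw [hzp2] at h
    rw [abs_lt]
    constructor
    · linarith [h.1]
    · linarith [h.2]
  obtain ⟨k, hk⟩ := pow_unbounded_of_one_lt (1 / |Tom c ω (m+1) x - 2/3|) (one_lt_two (α := ℝ))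
  rw [div_lt_iff₀ hpos] at hk
  have := hbd k
  rw [dbl k] at this
  linarith
end
end

section
/- Let c = 1/ℓ for some integer ℓ ≥ 3. Then the random c-Lüroth transformation has the random covering property: for every interval J ⊆ [c,1] of positive length there exist n ≥ 1 and ω ∈ {0,1}^ℕ such that T_ω^n(J) = [c,1]. -/
open MeasureTheory Filter Set
open scoped Classical ENNReal

set_option maxHeartbeats 1000000

noncomputable section

namespace RCL

variable {c : ℝ}

lemma cast2 {n : ℕ} (hn : 2 ≤ n) : (2:ℝ) ≤ (n:ℝ) := by exact_mod_cast hn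

lemma npos {n : ℕ} (hn : 2 ≤ n) : (0:ℝ) < (n:ℝ) := by linarith [cast2 hn]

lemma n1pos {n : ℕ} (hn : 2 ≤ n) : (0:ℝ) < (n:ℝ) - 1 := by linarith [cast2 hn]

lemma zm_pred_eq {n : ℕ} (hn : 2 ≤ n) :
    zm c (n-1) = 1/((n:ℝ)-1) - c * (1/((n:ℝ)-1)) * (1/(n:ℝ)) := by
  obtain ⟨m, rfl⟩ : ∃ m, n = m + 1 := ⟨n-1, by omega⟩
  simp only [zm, Nat.add_sub_cancel]
  push_cast
  ring

lemma E1 {n : ℕ} (hn : 2 ≤ n) :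
    1/((n:ℝ)-1) - zp c n = (1-c) * (1/(n:ℝ)) * (1/((n:ℝ)-1)) := by
  have h1 := npos hn; have h2 := n1pos hn
  rw [zp]; field_simp; ring

lemma E2 {n : ℕ} (hn : 2 ≤ n) :
    zp c n - 1/(n:ℝ) = c * (1/(n:ℝ)) * (1/((n:ℝ)-1)) := by
  rw [zp]; ring

lemma E4 {n : ℕ} (hn : 2 ≤ n) :
    1/((n:ℝ)-1) - zm c (n-1) = c * (1/((n:ℝ)-1)) * (1/(n:ℝ)) := by
  rw [zm_pred_eq hn]; ring

lemma E5 {n : ℕ} (hn : 2 ≤ n) :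
    zm c (n-1) - 1/(n:ℝ) = (1-c) * (1/(n:ℝ)) * (1/((n:ℝ)-1)) := by
  have h1 := npos hn; have h2 := n1pos hn
  rw [zm_pred_eq hn]; field_simp; ring

lemma F1 {n : ℕ} (hn : 2 ≤ n) :
    (n:ℝ)*((n:ℝ)-1)*(zp c n) - ((n:ℝ)-1) = c := by
  have h1 := npos hn; have h2 := n1pos hn
  rw [zp]; field_simp; ring

lemma F2 {n : ℕ} (hn : 2 ≤ n) :
    (n:ℝ) - (n:ℝ)*((n:ℝ)-1)*(zm c (n-1)) = c := by
  have h1 := npos hn; have h2 := n1pos hn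
  rw [zm_pred_eq hn]; field_simp; ring

lemma F3 {n : ℕ} (hn : 2 ≤ n) :
    (n:ℝ)*((n:ℝ)-1)*(1/((n:ℝ)-1)) - ((n:ℝ)-1) = 1 := by
  have h2 := n1pos hn
  field_simp; ring

lemma F4 {n : ℕ} (hn : 2 ≤ n) :
    (n:ℝ) - (n:ℝ)*((n:ℝ)-1)*(1/(n:ℝ)) = 1 := by
  have h1 := npos hn
  field_simp; ring

lemma odn {n : ℕ} (hn : 2 ≤ n) : (0:ℝ) < 1/(n:ℝ) := one_div_pos.mpr (npos hn)

lemma odn1 {n : ℕ} (hn : 2 ≤ n) : (0:ℝ) < 1/((n:ℝ)-1) := one_div_pos.mpr (n1pos hn)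

lemma zp_gt {n : ℕ} (hc0 : 0 < c) (hn : 2 ≤ n) : 1/(n:ℝ) < zp c n := by
  nlinarith [E2 (c:=c) hn, mul_pos (mul_pos hc0 (odn hn)) (odn1 hn)]

lemma zp_lt {n : ℕ} (hc1 : c < 1) (hn : 2 ≤ n) : zp c n < 1/((n:ℝ)-1) := by
  nlinarith [E1 (c:=c) hn, mul_pos (mul_pos (by linarith : (0:ℝ) < 1-c) (odn hn)) (odn1 hn)]

lemma zm_gt {n : ℕ} (hc1 : c < 1) (hn : 2 ≤ n) : 1/(n:ℝ) < zm c (n-1) := by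
  nlinarith [E5 (c:=c) hn, mul_pos (mul_pos (by linarith : (0:ℝ) < 1-c) (odn hn)) (odn1 hn)]

lemma zm_lt {n : ℕ} (hc0 : 0 < c) (hn : 2 ≤ n) : zm c (n-1) < 1/((n:ℝ)-1) := by
  nlinarith [E4 (c:=c) hn, mul_pos (mul_pos hc0 (odn1 hn)) (odn hn)]

lemma ceil_branch {n : ℕ} (hn : 2 ≤ n) {x : ℝ} (h1 : 1/(n:ℝ) ≤ x)
    (h2 : x < 1/((n:ℝ)-1)) : ⌈1/x⌉ = (n:ℤ) := by
  have hx0 : 0 < x := lt_of_lt_of_le (odn hn) h1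
  have ha : 1/x ≤ (n:ℝ) := (one_div_le hx0 (npos hn)).mpr h1
  have hb : (n:ℝ)-1 < 1/x := by
    have h3 : x * ((n:ℝ)-1) < 1 := by
      have := (lt_div_iff₀ (n1pos hn)).mp h2
      linarith
    rw [lt_div_iff₀ hx0]; nlinarith
  rw [Int.ceil_eq_iff]
  constructor
  · push_cast; linarith
  · push_cast; linarith

lemma one_div_n1_le_one {n : ℕ} (hn : 2 ≤ n) : 1/((n:ℝ)-1) ≤ 1 := by
  rw [div_le_one (n1pos hn)]; linarith [cast2 hn]

lemma TL_eq {n : ℕ} (hn : 2 ≤ n) {x : ℝ} (h1 : 1/(n:ℝ) ≤ x)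
    (h2 : x < 1/((n:ℝ)-1)) :
    TL x = (n:ℝ)*((n:ℝ)-1)*x - ((n:ℝ)-1) := by
  have hx0 : 0 < x := lt_of_lt_of_le (odn hn) h1
  have hx1 : x < 1 := lt_of_lt_of_le h2 (one_div_n1_le_one hn)
  rw [TL, if_neg hx0.ne', if_neg hx1.ne, ceil_branch hn h1 h2]
  push_cast; ring

lemma not_cond_false (hc0 : 0 < c) (hc1 : c < 1) {n : ℕ} (hn : 2 ≤ n) {x : ℝ}
    (h1 : zp c n ≤ x) (h2 : x < 1/((n:ℝ)-1)) :
    ¬ ∃ m : ℕ, 2 ≤ m ∧ 1/(m:ℝ) ≤ x ∧ x < zp c m := by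
  rintro ⟨m, hm, hmx, hxm⟩
  have hxn : 1/(n:ℝ) ≤ x := le_trans (zp_gt hc0 hn).le h1
  rcases lt_trichotomy m n with h | h | h
  · have hmn : (m:ℝ) ≤ (n:ℝ)-1 := by
      have : (m:ℝ) + 1 ≤ (n:ℝ) := by exact_mod_cast h
      linarith
    have : 1/((n:ℝ)-1) ≤ 1/(m:ℝ) := one_div_le_one_div_of_le (npos hm) hmn
    linarith
  · subst h; exact absurd hxm (not_lt.mpr h1)
  · have hnm : (n:ℝ) ≤ (m:ℝ)-1 := by
      have : (n:ℝ) + 1 ≤ (m:ℝ) := by exact_mod_cast h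
      linarith
    have h1m : 1/((m:ℝ)-1) ≤ 1/(n:ℝ) := one_div_le_one_div_of_le (npos hn) hnm
    have : zp c m < 1/((m:ℝ)-1) := zp_lt hc1 hm
    linarith

lemma not_cond_true (hc0 : 0 < c) (hc1 : c < 1) {n : ℕ} (hn : 2 ≤ n) {x : ℝ}
    (h1 : zm c (n-1) < x) (h2 : x < 1/((n:ℝ)-1)) :
    ¬ ∃ m : ℕ, 2 ≤ m ∧ 1/(m:ℝ) ≤ x ∧ x ≤ zm c (m-1) := by
  rintro ⟨m, hm, hmx, hxm⟩
  have hxn : 1/(n:ℝ) < x := lt_trans (zm_gt hc1 hn) h1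
  rcases lt_trichotomy m n with h | h | h
  · have hmn : (m:ℝ) ≤ (n:ℝ)-1 := by
      have : (m:ℝ) + 1 ≤ (n:ℝ) := by exact_mod_cast h
      linarith
    have : 1/((n:ℝ)-1) ≤ 1/(m:ℝ) := one_div_le_one_div_of_le (npos hm) hmn
    linarith
  · subst h; exact absurd hxm (not_le.mpr h1)
  · have hnm : (n:ℝ) ≤ (m:ℝ)-1 := by
      have : (n:ℝ) + 1 ≤ (m:ℝ) := by exact_mod_cast h
      linarith
    have h1m : 1/((m:ℝ)-1) ≤ 1/(n:ℝ) := one_div_le_one_div_of_le (npos hn) hnm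
    have : zm c (m-1) < 1/((m:ℝ)-1) := zm_lt hc0 hm
    linarith

lemma cast_pred {n : ℕ} (hn : 2 ≤ n) : ((n-1 : ℕ):ℝ) = (n:ℝ) - 1 := by
  rw [Nat.cast_sub (by omega)]; norm_num

lemma Tc_one (hc0 : 0 < c) (j : Bool) : Tc j c 1 = 1 := by
  rw [Tc, if_neg (fun h => hc0.ne' h.1), if_pos rfl]

lemma Tc_false_TL (hc0 : 0 < c) (hc1 : c < 1) {n : ℕ} (hn : 2 ≤ n) {x : ℝ}
    (h1 : zp c n ≤ x) (h2 : x ≤ 1/((n:ℝ)-1)) :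
    Tc false c x = (n:ℝ)*((n:ℝ)-1)*x - ((n:ℝ)-1) := by
  rcases lt_or_eq_of_le h2 with h2' | h2'
  · have hx1 : x < 1 := lt_of_lt_of_le h2' (one_div_n1_le_one hn)
    have hne : ¬((false = false ∧ ∃ m : ℕ, 2 ≤ m ∧ 1/(m:ℝ) ≤ x ∧ x < zp c m) ∨
        (false = true ∧ ∃ m : ℕ, 2 ≤ m ∧ 1/(m:ℝ) ≤ x ∧ x ≤ zm c (m-1))) := by
      rintro (⟨-, hex⟩ | ⟨hb, -⟩)
      · exact not_cond_false hc0 hc1 hn h1 h2' hex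
      · simp at hb
    rw [Tc, if_neg (fun h => hc0.ne' h.1), if_neg hx1.ne, if_neg hne]
    exact TL_eq hn (le_trans (zp_gt hc0 hn).le h1) h2'
  · by_cases hn3 : 3 ≤ n
    · have hn1 : 2 ≤ n - 1 := by omega
      have hc2 : ((n-1 : ℕ):ℝ) = (n:ℝ) - 1 := cast_pred hn
      have hn2r : (3:ℝ) ≤ (n:ℝ) := by exact_mod_cast hn3
      have hx1 : x < 1 := by
        rw [h2', div_lt_one (n1pos hn)]; linarith
      have hcond : (false = false ∧ ∃ m : ℕ, 2 ≤ m ∧ 1/(m:ℝ) ≤ x ∧ x < zp c m) ∨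
          (false = true ∧ ∃ m : ℕ, 2 ≤ m ∧ 1/(m:ℝ) ≤ x ∧ x ≤ zm c (m-1)) := by
        refine Or.inl ⟨rfl, n-1, hn1, ?_, ?_⟩
        · rw [hc2]; exact h2'.ge
        · have := zp_gt (n := n-1) hc0 hn1
          rw [hc2] at this; rw [← h2'] at this; exact this
      rw [Tc, if_neg (fun h => hc0.ne' h.1), if_neg hx1.ne, if_pos hcond, TA]
      have hTL : TL x = ((n-1:ℕ):ℝ)*(((n-1:ℕ):ℝ)-1)*x - (((n-1:ℕ):ℝ)-1) := by
        apply TL_eq hn1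
        · rw [hc2]; exact h2'.ge
        · rw [hc2, h2']
          apply one_div_lt_one_div_of_lt
          · linarith
          · linarith
      rw [hTL, hc2, h2']
      have hne1 : (n:ℝ) - 1 ≠ 0 := (n1pos hn).ne'
      field_simp; ring
    · have hn2 : n = 2 := by omega
      subst hn2
      have hx1 : x = 1 := by rw [h2']; norm_num
      rw [hx1, Tc_one hc0]
      norm_num

lemma Tc_true_TL (hc0 : 0 < c) (hc1 : c < 1) {n : ℕ} (hn : 2 ≤ n) {x : ℝ}
    (h1 : zm c (n-1) < x) (h2 : x ≤ 1/((n:ℝ)-1)) :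
    Tc true c x = (n:ℝ)*((n:ℝ)-1)*x - ((n:ℝ)-1) := by
  rcases lt_or_eq_of_le h2 with h2' | h2'
  · have hx1 : x < 1 := lt_of_lt_of_le h2' (one_div_n1_le_one hn)
    have hne : ¬((true = false ∧ ∃ m : ℕ, 2 ≤ m ∧ 1/(m:ℝ) ≤ x ∧ x < zp c m) ∨
        (true = true ∧ ∃ m : ℕ, 2 ≤ m ∧ 1/(m:ℝ) ≤ x ∧ x ≤ zm c (m-1))) := by
      rintro (⟨hb, -⟩ | ⟨-, hex⟩)
      · simp at hb
      · exact not_cond_true hc0 hc1 hn h1 h2' hex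
    rw [Tc, if_neg (fun h => hc0.ne' h.1), if_neg hx1.ne, if_neg hne]
    exact TL_eq hn (le_trans (zm_gt hc1 hn).le h1.le) h2'
  · by_cases hn3 : 3 ≤ n
    · have hn1 : 2 ≤ n - 1 := by omega
      have hc2 : ((n-1 : ℕ):ℝ) = (n:ℝ) - 1 := cast_pred hn
      have hn2r : (3:ℝ) ≤ (n:ℝ) := by exact_mod_cast hn3
      have hx1 : x < 1 := by
        rw [h2', div_lt_one (n1pos hn)]; linarith
      have hcond : (true = false ∧ ∃ m : ℕ, 2 ≤ m ∧ 1/(m:ℝ) ≤ x ∧ x < zp c m) ∨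
          (true = true ∧ ∃ m : ℕ, 2 ≤ m ∧ 1/(m:ℝ) ≤ x ∧ x ≤ zm c (m-1)) := by
        refine Or.inr ⟨rfl, n-1, hn1, ?_, ?_⟩
        · rw [hc2]; exact h2'.ge
        · have := zm_gt (n := n-1) hc1 hn1
          rw [hc2] at this; rw [← h2'] at this; exact this.le
      rw [Tc, if_neg (fun h => hc0.ne' h.1), if_neg hx1.ne, if_pos hcond, TA]
      have hTL : TL x = ((n-1:ℕ):ℝ)*(((n-1:ℕ):ℝ)-1)*x - (((n-1:ℕ):ℝ)-1) := by
        apply TL_eq hn1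
        · rw [hc2]; exact h2'.ge
        · rw [hc2, h2']
          apply one_div_lt_one_div_of_lt
          · linarith
          · linarith
      rw [hTL, hc2, h2']
      have hne1 : (n:ℝ) - 1 ≠ 0 := (n1pos hn).ne'
      field_simp; ring
    · have hn2 : n = 2 := by omega
      subst hn2
      have hx1 : x = 1 := by rw [h2']; norm_num
      rw [hx1, Tc_one hc0]
      norm_num

lemma Tc_false_TA (hc0 : 0 < c) (hc1 : c < 1) {n : ℕ} (hn : 2 ≤ n) {x : ℝ}
    (h1 : 1/(n:ℝ) ≤ x) (h2 : x < zp c n) :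
    Tc false c x = (n:ℝ) - (n:ℝ)*((n:ℝ)-1)*x := by
  have hlt : x < 1/((n:ℝ)-1) := lt_trans h2 (zp_lt hc1 hn)
  have hx1 : x < 1 := lt_of_lt_of_le hlt (one_div_n1_le_one hn)
  have hcond : (false = false ∧ ∃ m : ℕ, 2 ≤ m ∧ 1/(m:ℝ) ≤ x ∧ x < zp c m) ∨
      (false = true ∧ ∃ m : ℕ, 2 ≤ m ∧ 1/(m:ℝ) ≤ x ∧ x ≤ zm c (m-1)) :=
    Or.inl ⟨rfl, n, hn, h1, h2⟩
  rw [Tc, if_neg (fun h => hc0.ne' h.1), if_neg hx1.ne, if_pos hcond, TA,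
    TL_eq hn h1 hlt]
  ring

lemma Tc_true_TA (hc0 : 0 < c) (hc1 : c < 1) {n : ℕ} (hn : 2 ≤ n) {x : ℝ}
    (h1 : 1/(n:ℝ) ≤ x) (h2 : x ≤ zm c (n-1)) :
    Tc true c x = (n:ℝ) - (n:ℝ)*((n:ℝ)-1)*x := by
  have hlt : x < 1/((n:ℝ)-1) := lt_of_le_of_lt h2 (zm_lt hc0 hn)
  have hx1 : x < 1 := lt_of_lt_of_le hlt (one_div_n1_le_one hn)
  have hcond : (true = false ∧ ∃ m : ℕ, 2 ≤ m ∧ 1/(m:ℝ) ≤ x ∧ x < zp c m) ∨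
      (true = true ∧ ∃ m : ℕ, 2 ≤ m ∧ 1/(m:ℝ) ≤ x ∧ x ≤ zm c (m-1)) :=
    Or.inr ⟨rfl, n, hn, h1, h2⟩
  rw [Tc, if_neg (fun h => hc0.ne' h.1), if_neg hx1.ne, if_pos hcond, TA,
    TL_eq hn h1 hlt]
  ring

lemma branch_exists {x : ℝ} (h0 : 0 < x) (h1 : x < 1) :
    ∃ n : ℕ, 2 ≤ n ∧ 1/(n:ℝ) ≤ x ∧ x < 1/((n:ℝ)-1) := by
  have hx : 1 < 1/x := by rw [lt_div_iff₀ h0]; linarith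
  have hz1 : (1:ℝ) < ((⌈1/x⌉:ℤ) : ℝ) := lt_of_lt_of_le hx (Int.le_ceil _)
  have hz2 : (2:ℤ) ≤ ⌈1/x⌉ := by exact_mod_cast hz1
  have h0' : (0:ℤ) ≤ ⌈1/x⌉ := by omega
  have hcz : (((⌈1/x⌉).toNat : ℕ):ℝ) = ((⌈1/x⌉:ℤ):ℝ) := by
    exact_mod_cast congrArg (fun w : ℤ => (w:ℝ)) (Int.toNat_of_nonneg h0')
  refine ⟨(⌈1/x⌉).toNat, by omega, ?_, ?_⟩
  · rw [hcz]
    exact (one_div_le h0 (by linarith)).mp (Int.le_ceil _)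
  · rw [hcz]
    have hlt : ((⌈1/x⌉:ℤ):ℝ) - 1 < 1/x := by
      have := Int.ceil_lt_add_one (1/x)
      linarith
    have hpos : (0:ℝ) < ((⌈1/x⌉:ℤ):ℝ) - 1 := by linarith
    rw [lt_one_div h0 hpos]
    exact hlt

lemma surjOn_inc {f : ℝ → ℝ} {A B x y : ℝ} (hA : 0 < A) (hxy : x ≤ y)
    (hf : ∀ t ∈ Set.Icc x y, f t = A*t + B) :
    Set.SurjOn f (Set.Icc x y) (Set.Icc (A*x+B) (A*y+B)) := by
  intro t ht
  obtain ⟨h1, h2⟩ := ht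
  have hmem : (t-B)/A ∈ Set.Icc x y :=
    ⟨by rw [le_div_iff₀ hA]; linarith, by rw [div_le_iff₀ hA]; linarith⟩
  exact ⟨(t-B)/A, hmem, by rw [hf _ hmem]; field_simp; ring⟩

lemma surjOn_dec {f : ℝ → ℝ} {A B x y : ℝ} (hA : A < 0) (hxy : x ≤ y)
    (hf : ∀ t ∈ Set.Icc x y, f t = A*t + B) :
    Set.SurjOn f (Set.Icc x y) (Set.Icc (A*y+B) (A*x+B)) := by
  intro t ht
  obtain ⟨h1, h2⟩ := ht
  have hmem : (t-B)/A ∈ Set.Icc x y :=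
    ⟨by rw [le_div_iff_of_neg hA]; linarith, by rw [div_le_iff_of_neg hA]; linarith⟩
  refine ⟨(t-B)/A, hmem, ?_⟩
  rw [hf _ hmem, mul_div_cancel₀ _ hA.ne]
  ring

lemma tc_maps (hc0 : 0 < c) (hc3 : c ≤ 1/3) (j : Bool) :
    Set.MapsTo (Tc j c) (Set.Icc c 1) (Set.Icc c 1) := by
  have hc1 : c < 1 := by linarith
  rintro x ⟨hcx, hx1⟩
  rcases eq_or_lt_of_le hx1 with rfl | hx1'
  · rw [Tc_one hc0]; exact ⟨by linarith, le_refl _⟩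
  · obtain ⟨n, hn, h1, h2⟩ := branch_exists (lt_of_lt_of_le hc0 hcx) hx1'
    have hn2 := cast2 hn
    have hA : (0:ℝ) < (n:ℝ)*((n:ℝ)-1) := mul_pos (npos hn) (n1pos hn)
    have hF3 := F3 (n := n) hn
    have hF4 := F4 (n := n) hn
    cases j with
    | false =>
      by_cases hsp : x < zp c n
      · rw [Tc_false_TA hc0 hc1 hn h1 hsp]
        constructor
        · nlinarith [F1 (c:=c) (n:=n) hn]
        · nlinarith
      · push_neg at hsp
        rw [Tc_false_TL hc0 hc1 hn hsp h2.le]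
        constructor
        · nlinarith [F1 (c:=c) (n:=n) hn]
        · nlinarith
    | true =>
      by_cases hsm : x ≤ zm c (n-1)
      · rw [Tc_true_TA hc0 hc1 hn h1 hsm]
        constructor
        · nlinarith [F2 (c:=c) (n:=n) hn]
        · nlinarith
      · push_neg at hsm
        rw [Tc_true_TL hc0 hc1 hn hsm h2.le]
        constructor
        · nlinarith [F2 (c:=c) (n:=n) hn]
        · nlinarith

lemma tom_maps (hc0 : 0 < c) (hc3 : c ≤ 1/3) (ω : ℕ → Bool) :
    ∀ N : ℕ, Set.MapsTo (Tom c ω N) (Set.Icc c 1) (Set.Icc c 1) := by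
  intro N
  induction N with
  | zero => exact fun x hx => hx
  | succ N ih =>
    intro x hx
    exact tc_maps hc0 hc3 (ω N) (ih hx)

lemma tom_cons (j : Bool) (ω : ℕ → Bool) :
    ∀ (N : ℕ) (x : ℝ),
      Tom c (fun i => if i = 0 then j else ω (i-1)) (N+1) x = Tom c ω N (Tc j c x) := by
  intro N
  induction N with
  | zero => intro x; simp [Tom]
  | succ N ih =>
    intro x
    show Tc _ c (Tom c _ (N+1) x) = Tc (ω N) c (Tom c ω N (Tc j c x))
    rw [ih x]
    norm_num

lemma caseA (hc0 : 0 < c) (hc3 : c ≤ 1/3) {n : ℕ} (hn : 2 ≤ n) {x y : ℝ}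
    (hx : 1/(n:ℝ) ≤ x) (hxy : x < y) (hy : y ≤ 1/((n:ℝ)-1)) :
    (∃ (j : Bool) (u v : ℝ), c ≤ u ∧ u < v ∧ v ≤ 1 ∧
      v - u = (n:ℝ)*((n:ℝ)-1)*(y-x) ∧
      Set.SurjOn (Tc j c) (Set.Icc x y) (Set.Icc u v))
    ∨ (x ≤ zp c n ∧ zm c (n-1) ≤ y) := by
  have hc1 : c < 1 := by linarith
  have hn2 := cast2 hn
  have hA : (0:ℝ) < (n:ℝ)*((n:ℝ)-1) := mul_pos (npos hn) (n1pos hn)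
  by_cases hy1 : y ≤ zm c (n-1)
  · left
    refine ⟨true, -((n:ℝ)*((n:ℝ)-1))*y + (n:ℝ), -((n:ℝ)*((n:ℝ)-1))*x + (n:ℝ),
      ?_, ?_, ?_, by ring, ?_⟩
    · nlinarith [F2 (c:=c) (n:=n) hn]
    · nlinarith
    · nlinarith [F4 (n:=n) hn]
    · exact surjOn_dec (by linarith) hxy.le (fun t ht => by
        rw [Tc_true_TA hc0 hc1 hn (le_trans hx ht.1) (le_trans ht.2 hy1)]; ring)
  · push_neg at hy1
    by_cases hx1 : zp c n ≤ x
    · left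
      refine ⟨false, (n:ℝ)*((n:ℝ)-1)*x + -((n:ℝ)-1), (n:ℝ)*((n:ℝ)-1)*y + -((n:ℝ)-1),
        ?_, ?_, ?_, by ring, ?_⟩
      · nlinarith [F1 (c:=c) (n:=n) hn]
      · nlinarith
      · nlinarith [F3 (n:=n) hn]
      · exact surjOn_inc hA hxy.le (fun t ht => by
          rw [Tc_false_TL hc0 hc1 hn (le_trans hx1 ht.1) (le_trans ht.2 hy)]; ring)
    · push_neg at hx1
      exact Or.inr ⟨hx1.le, hy1.le⟩

lemma keyStep (hc0 : 0 < c) (hc3 : c ≤ 1/3) {x y : ℝ}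
    (hcx : c ≤ x) (hxy : x < y) (hy1 : y ≤ 1) :
    (∃ (j : Bool) (x' y' u v : ℝ), x ≤ x' ∧ x' < y' ∧ y' ≤ y ∧ c ≤ u ∧ u < v ∧
      v ≤ 1 ∧ (3/2)*(y-x) ≤ v - u ∧ Set.SurjOn (Tc j c) (Set.Icc x' y') (Set.Icc u v))
    ∨ (∃ m : ℕ, 2 ≤ m ∧ x ≤ zp c m ∧ zm c (m-1) ≤ y) := by
  have hc1 : c < 1 := by linarith
  have hx1 : x < 1 := lt_of_lt_of_le hxy hy1
  obtain ⟨n, hn, hzx, hxz⟩ := branch_exists (lt_of_lt_of_le hc0 hcx) hx1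
  have hn2 := cast2 hn
  by_cases hyb : y ≤ 1/((n:ℝ)-1)
  · rcases caseA hc0 hc3 hn hzx hxy hyb with ⟨j, u, v, hu, huv, hv, hfac, hsurj⟩ | hgood
    · left
      have hs : (2:ℝ) ≤ (n:ℝ)*((n:ℝ)-1) := by nlinarith
      have hm := mul_le_mul hs (le_refl (y-x)) (by linarith) (by linarith)
      exact ⟨j, x, y, u, v, le_refl _, hxy, le_refl _, hu, huv, hv,
        by linarith, hsurj⟩
    · exact Or.inr ⟨n, hn, hgood.1, hgood.2⟩
  · push_neg at hyb
    have hn3 : 3 ≤ n := by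
      rcases Nat.lt_or_ge n 3 with h | h
      · exfalso
        have : n = 2 := by omega
        subst this
        norm_num at hyb
        linarith
      · exact h
    have hn3r : (3:ℝ) ≤ (n:ℝ) := by exact_mod_cast hn3
    have hn1 : 2 ≤ n - 1 := by omega
    have hc2 : ((n-1 : ℕ):ℝ) = (n:ℝ) - 1 := cast_pred hn
    have hnn : n - 1 - 1 = n - 2 := by omega
    by_cases hgood : zm c (n-2) ≤ y
    · refine Or.inr ⟨n-1, hn1, ?_, ?_⟩
      · have := zp_gt (c:=c) (n:=n-1) hc0 hn1
        rw [hc2] at this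
        linarith
      · rw [hnn]; exact hgood
    · push_neg at hgood
      have hy2 : y < 1/((n:ℝ)-2) := by
        have hE4 := E4 (c:=c) (n:=n-1) hn1
        rw [hc2] at hE4
        have h1 : (0:ℝ) < 1/((n:ℝ)-1-1) := by
          apply one_div_pos.mpr; linarith
        have h2 : (0:ℝ) < 1/((n:ℝ)-1) := odn1 hn
        rw [hnn] at hE4
        have : zm c (n-2) < 1/((n:ℝ)-1-1) := by
          nlinarith [mul_pos (mul_pos hc0 h1) h2]
        have hee : (n:ℝ)-1-1 = (n:ℝ)-2 := by ring
        rw [hee] at this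
        linarith
      by_cases hhalf : (y-x)/4 ≤ 1/((n:ℝ)-1) - x
      · rcases caseA hc0 hc3 hn hzx hxz (le_refl _) with
          ⟨j, u, v, hu, huv, hv, hfac, hsurj⟩ | hg
        · left
          refine ⟨j, x, 1/((n:ℝ)-1), u, v, le_refl _, hxz, hyb.le, hu, huv, hv, ?_, hsurj⟩
          have hs : (6:ℝ) ≤ (n:ℝ)*((n:ℝ)-1) := by nlinarith
          have hm := mul_le_mul hs hhalf (by linarith) (by nlinarith)
          linarith
        · exact Or.inr ⟨n, hn, hg.1, le_trans hg.2 hyb.le⟩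
      · push_neg at hhalf
        have hyy : y ≤ 1/(((n-1:ℕ):ℝ)-1) := by
          rw [hc2]
          have : (n:ℝ)-1-1 = (n:ℝ)-2 := by ring
          rw [this]
          exact hy2.le
        have hxx : 1/((n-1:ℕ):ℝ) ≤ 1/((n:ℝ)-1) := by rw [hc2]
        rcases caseA hc0 hc3 hn1 hxx hyb hyy with
          ⟨j, u, v, hu, huv, hv, hfac, hsurj⟩ | hg
        · left
          refine ⟨j, 1/((n:ℝ)-1), y, u, v, hxz.le, hyb, le_refl _, hu, huv, hv, ?_, hsurj⟩
          rw [hc2] at hfac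
          have hs2 : (2:ℝ) ≤ ((n:ℝ)-1)*((n:ℝ)-1-1) := by nlinarith
          have hr : (3/4)*(y-x) ≤ y - 1/((n:ℝ)-1) := by linarith
          have hm := mul_le_mul hs2 hr (by linarith) (by nlinarith)
          linarith
        · exfalso
          rw [hnn] at hg
          exact absurd hg.2 (not_le.mpr hgood)

lemma zm2_eq : zm c 2 = 1/2 - c * (1/6) := by
  rw [zm]; norm_num; ring

lemma goodDone (hc0 : 0 < c) (hc3 : c ≤ 1/3) {m : ℕ} (hm : 2 ≤ m) {x y : ℝ}
    (hx : x ≤ zp c m) (hy : zm c (m-1) ≤ y) :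
    ∃ (N : ℕ) (ω : ℕ → Bool), 1 ≤ N ∧
      Set.SurjOn (Tom c ω N) (Set.Icc x y) (Set.Icc c 1) := by
  have hc1 : c < 1 := by linarith
  have hzpzm : zp c m < zm c (m-1) := by
    have hE1 := E2 (c:=c) (n:=m) hm
    have hE5 := E5 (c:=c) (n:=m) hm
    have hp := mul_pos (mul_pos (by linarith : (0:ℝ) < 1-2*c) (odn hm)) (odn1 hm)
    nlinarith [hE1, hE5]
  -- step 1 : Tc false maps [zp c m, zm c (m-1)] onto [c, 1-c]
  have hs1 : Set.SurjOn (Tc false c) (Set.Icc (zp c m) (zm c (m-1)))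
      (Set.Icc ((m:ℝ)*((m:ℝ)-1)*(zp c m) + -((m:ℝ)-1))
               ((m:ℝ)*((m:ℝ)-1)*(zm c (m-1)) + -((m:ℝ)-1))) := by
    apply surjOn_inc (mul_pos (npos hm) (n1pos hm)) hzpzm.le
    intro t ht
    rw [Tc_false_TL hc0 hc1 hm ht.1 (le_trans ht.2 (zm_lt hc0 hm).le)]
    ring
  have e1 : (m:ℝ)*((m:ℝ)-1)*(zp c m) + -((m:ℝ)-1) = c := by
    have := F1 (c:=c) (n:=m) hm; linarith
  have e2 : (m:ℝ)*((m:ℝ)-1)*(zm c (m-1)) + -((m:ℝ)-1) = 1 - c := by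
    have := F2 (c:=c) (n:=m) hm; linarith
  rw [e1, e2] at hs1
  -- step 2 : Tc true maps [1/3, zm c 2] onto [c, 1]
  have hs2 : Set.SurjOn (Tc true c) (Set.Icc (1/3 : ℝ) (zm c 2))
      (Set.Icc ((-6:ℝ) * zm c 2 + 3) ((-6:ℝ) * (1/3:ℝ) + 3)) := by
    apply surjOn_dec (by norm_num : (-6:ℝ) < 0)
    · rw [zm2_eq]; linarith
    · intro t ht
      have h3 : (1:ℝ)/((3:ℕ):ℝ) ≤ t := by
        push_cast; linarith [ht.1]
      have h4 : t ≤ zm c (3-1) := by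
        have h32 : (3:ℕ) - 1 = 2 := by norm_num
        rw [h32]; exact ht.2
      rw [Tc_true_TA hc0 hc1 (by norm_num : 2 ≤ 3) h3 h4]
      push_cast; ring
  have e3 : (-6:ℝ) * zm c 2 + 3 = c := by rw [zm2_eq]; ring
  have e4 : (-6:ℝ) * (1/3:ℝ) + 3 = 1 := by norm_num
  rw [e3, e4] at hs2
  have hmid : Set.Icc (1/3 : ℝ) (zm c 2) ⊆ Set.Icc c (1-c) :=
    Set.Icc_subset_Icc hc3 (by rw [zm2_eq]; linarith)
  have hs1' : Set.SurjOn (Tc false c) (Set.Icc (zp c m) (zm c (m-1)))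
      (Set.Icc (1/3 : ℝ) (zm c 2)) := hs1.mono (subset_refl _) hmid
  have hcomp := hs2.comp hs1'
  refine ⟨2, fun i => i != 0, by norm_num, ?_⟩
  intro t ht
  obtain ⟨s, hs, hst⟩ := hcomp ht
  refine ⟨s, Set.Icc_subset_Icc hx hy hs, ?_⟩
  show Tc _ c (Tc _ c s) = t
  norm_num
  exact hst

lemma grow (hc0 : 0 < c) (hc3 : c ≤ 1/3) :
    ∀ k : ℕ, ∀ x y : ℝ, c ≤ x → y ≤ 1 → x < y → (2/3:ℝ)^(k+1) < y - x →
    ∃ (N : ℕ) (ω : ℕ → Bool), 1 ≤ N ∧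
      Set.SurjOn (Tom c ω N) (Set.Icc x y) (Set.Icc c 1) := by
  intro k
  induction k with
  | zero =>
    intro x y hcx hy1 hxy hlen
    rw [pow_one] at hlen
    have hx3 : x ≤ 1/3 := by by_contra h; push_neg at h; linarith
    have hzp3 : (1/3:ℝ) ≤ zp c 3 := by
      rw [zp]; push_cast
      have : (0:ℝ) < c * (1/3) * (1/(3-1)) := by norm_num; positivity
      norm_num at this ⊢
      linarith
    have hzm : zm c (3-1) ≤ y := by
      have h32 : (3:ℕ) - 1 = 2 := by norm_num
      rw [h32, zm2_eq]
      linarith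
    exact goodDone hc0 hc3 (by norm_num : 2 ≤ 3) (le_trans hx3 hzp3) hzm
  | succ k ih =>
    intro x y hcx hy1 hxy hlen
    rcases keyStep hc0 hc3 hcx hxy hy1 with
      ⟨j, x', y', u, v, hxx', hx'y', hy'y, hu, huv, hv, hfac, hsurj⟩ | ⟨m, hm, h1, h2⟩
    · have hlen' : (2/3:ℝ)^(k+1) < v - u := by
        have he : (3/2:ℝ)*(2/3)^(k+1+1) = (2/3)^(k+1) := by
          rw [pow_succ]; ring
        nlinarith [hfac, hlen]
      obtain ⟨N, ω, hN, hsurj2⟩ := ih u v hu hv huv hlen'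
      refine ⟨N+1, fun i => if i = 0 then j else ω (i-1), by omega, ?_⟩
      intro t ht
      obtain ⟨s, hs, hst⟩ := hsurj2 ht
      obtain ⟨r, hr, hrs⟩ := hsurj hs
      refine ⟨r, Set.Icc_subset_Icc hxx' hy'y hr, ?_⟩
      rw [tom_cons, hrs, hst]
    · exact goodDone hc0 hc3 hm h1 h2

end RCL

/-- for `c = 1/ℓ`, `ℓ ≥ 3`, the random `c`-Lüroth transformation has the
random covering property. -/
theorem random_covering (ℓ : ℕ) (hℓ : 3 ≤ ℓ) (c : ℝ) (hc : c = 1 / (ℓ : ℝ))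
    (J : Set ℝ) (hJ : J ⊆ Set.Icc c 1) (hJconn : J.OrdConnected)
    (hJlen : ∃ a b : ℝ, a < b ∧ Set.Ioo a b ⊆ J) :
    ∃ (n : ℕ) (ω : ℕ → Bool), 1 ≤ n ∧ Tom c ω n '' J = Set.Icc c 1 := by
  obtain ⟨a, b, hab, hJab⟩ := hJlen
  have hl3 : (3:ℝ) ≤ (ℓ:ℝ) := by exact_mod_cast hℓ
  have hc0 : 0 < c := by rw [hc]; positivity
  have hc3 : c ≤ 1/3 := by
    rw [hc, div_le_div_iff₀ (by linarith) (by norm_num)]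
    linarith
  set a' := (2*a+b)/3 with ha'def
  set b' := (a+2*b)/3 with hb'def
  have ha' : a' ∈ Set.Ioo a b := by
    constructor
    · rw [ha'def, lt_div_iff₀ (by norm_num : (0:ℝ) < 3)]; linarith
    · rw [ha'def, div_lt_iff₀ (by norm_num : (0:ℝ) < 3)]; linarith
  have hb' : b' ∈ Set.Ioo a b := by
    constructor
    · rw [hb'def, lt_div_iff₀ (by norm_num : (0:ℝ) < 3)]; linarith
    · rw [hb'def, div_lt_iff₀ (by norm_num : (0:ℝ) < 3)]; linarith
  have hIccJ : Set.Icc a' b' ⊆ J := fun t ht =>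
    hJab ⟨lt_of_lt_of_le ha'.1 ht.1, lt_of_le_of_lt ht.2 hb'.2⟩
  have hca' : c ≤ a' := (hJ (hJab ha')).1
  have hb'1 : b' ≤ 1 := (hJ (hJab hb')).2
  have ha'b' : a' < b' := by
    rw [ha'def, hb'def, div_lt_div_iff₀ (by norm_num : (0:ℝ) < 3) (by norm_num : (0:ℝ) < 3)]
    linarith
  obtain ⟨k, hk⟩ := exists_pow_lt_of_lt_one (sub_pos.mpr ha'b') (by norm_num : (2/3:ℝ) < 1)
  have hk' : (2/3:ℝ)^(k+1) < b' - a' := by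
    refine lt_of_le_of_lt ?_ hk
    exact pow_le_pow_of_le_one (by norm_num) (by norm_num) (by omega)
  obtain ⟨N, ω, hN, hsurj⟩ := RCL.grow hc0 hc3 k a' b' hca' hb'1 ha'b' hk'
  refine ⟨N, ω, hN, Set.Subset.antisymm ?_ ?_⟩
  · rintro z ⟨w, hwJ, rfl⟩
    exact RCL.tom_maps hc0 hc3 ω N (hJ hwJ)
  · intro t ht
    obtain ⟨s, hs, hst⟩ := hsurj ht
    exact ⟨s, hIccJ hs, hst⟩
end
end

section
/- Let c ∈ ℚ ∩ (0,1/2]. Then the full random orbit set O_c = {T_ω^n(c) : ω ∈ {0,1}^ℕ, n ≥ 0} ∪ {T_ω^n(1−c) : ω ∈ {0,1}^ℕ, n ≥ 0} is a finite set (hence the random c-Lüroth transformation L_c admits a finite Markov partition). -/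
open MeasureTheory Filter Set
open scoped Classical ENNReal

noncomputable section

set_option maxHeartbeats 1000000 in
/-- Key invariance lemma: `Tc` preserves membership in `[c,1]` and preserves having
denominator dividing `D`. -/
lemma Tc_invar (c : ℝ) (hc0 : 0 < c) (hc : c ≤ 1/2) (D : ℕ)
    (j : Bool) (x : ℝ) (hx : x ∈ Set.Icc c 1) (hk : ∃ k : ℤ, (D:ℝ) * x = k) :
    Tc j c x ∈ Set.Icc c 1 ∧ ∃ k : ℤ, (D:ℝ) * (Tc j c x) = k := by
  obtain ⟨hcx, hx1⟩ := hx
  obtain ⟨k, hk⟩ := hk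
  have hc1 : c ≤ 1 := by linarith
  unfold Tc
  rw [if_neg (fun h => absurd h.1 hc0.ne')]
  by_cases hx1' : x = 1
  · rw [if_pos hx1']
    exact ⟨⟨hc1, le_refl 1⟩, ⟨(D:ℤ), by push_cast; ring⟩⟩
  rw [if_neg hx1']
  have hxlt : x < 1 := lt_of_le_of_ne hx1 hx1'
  have hx0 : 0 < x := lt_of_lt_of_le hc0 hcx
  set m := ⌈1/x⌉ with hmdef
  have h1x : 1 < 1/x := one_lt_one_div hx0 hxlt
  have hm2 : 2 ≤ m := by
    have : (1:ℤ) < m := Int.lt_ceil.mpr (by exact_mod_cast h1x)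
    omega
  set M := (m : ℝ) with hMdef
  have hM2 : (2:ℝ) ≤ M := by rw [hMdef]; exact_mod_cast hm2
  have hM0 : M ≠ 0 := by intro h; rw [h] at hM2; linarith
  have hM1 : M - 1 ≠ 0 := by intro h; nlinarith
  have hMx : 1 ≤ M * x := by
    have h := Int.le_ceil (1/x)
    rw [div_le_iff₀ hx0] at h
    nlinarith
  have hMx' : (M - 1) * x < 1 := by
    have h := Int.ceil_lt_add_one (1/x)
    have h2 : M - 1 < 1/x := by push_cast at h ⊢; linarith
    rw [lt_div_iff₀ hx0] at h2
    linarith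
  have hTL : TL x = M * (M - 1) * x - (M - 1) := by
    unfold TL; rw [if_neg hx0.ne', if_neg hx1']
  have hTL0 : 0 ≤ TL x := by rw [hTL]; nlinarith
  have hTL1 : TL x < 1 := by rw [hTL]; nlinarith
  have hTLk : (D:ℝ) * TL x = ((m * (m - 1) * k - (m - 1) * D : ℤ) : ℝ) := by
    rw [hTL]; push_cast; linear_combination (M * (M - 1)) * hk
  -- A generic lemma: if the witness region constraints hold for `n`, then `n = m`.
  have hsame : ∀ n : ℕ, 2 ≤ n → 1/(n:ℝ) ≤ x → ((n:ℝ) - 1) * x < 1 → M = (n:ℝ) := by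
    intro n hn2 hnx hlt
    have hNr2 : (2:ℝ) ≤ (n:ℝ) := by exact_mod_cast hn2
    have hmn : m ≤ (n:ℤ) := by
      apply Int.ceil_le.mpr
      push_cast
      rw [div_le_iff₀ hx0]
      have := (div_le_iff₀ (by linarith : (0:ℝ) < (n:ℝ))).mp hnx
      nlinarith
    have hnm : (n:ℤ) ≤ m := by
      have h2 : ((n:ℝ) - 1) < 1/x := by rw [lt_div_iff₀ hx0]; linarith
      have : ((n:ℤ) - 1 : ℤ) < m := Int.lt_ceil.mpr (by push_cast; linarith)
      omega
    have heq : m = (n:ℤ) := le_antisymm hmn hnm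
    rw [hMdef, heq]; push_cast; ring
  by_cases hcond : (j = false ∧ ∃ n : ℕ, 2 ≤ n ∧ 1/(n:ℝ) ≤ x ∧ x < zp c n) ∨
          (j = true ∧ ∃ n : ℕ, 2 ≤ n ∧ 1/(n:ℝ) ≤ x ∧ x ≤ zm c (n-1))
  · rw [if_pos hcond]
    have key : TL x ≤ 1 - c := by
      rcases hcond with ⟨_, n, hn2, hnx, hzp⟩ | ⟨_, n, hn2, hnx, hzm⟩
      · set Nr := (n:ℝ) with hNr
        have hNr2 : (2:ℝ) ≤ Nr := by rw [hNr]; exact_mod_cast hn2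
        have hNr0 : Nr ≠ 0 := by intro h; rw [h] at hNr2; linarith
        have hNr1 : Nr - 1 ≠ 0 := by intro h; nlinarith
        unfold zp at hzp
        rw [show (1:ℝ)/Nr + c * (1/Nr) * (1/(Nr - 1)) = ((Nr - 1) + c)/(Nr * (Nr - 1)) by
          field_simp; try ring] at hzp
        rw [lt_div_iff₀ (by nlinarith : (0:ℝ) < Nr * (Nr - 1))] at hzp
        have hlt : (Nr - 1) * x < 1 := by nlinarith
        have hMN := hsame n hn2 hnx hlt
        rw [hTL, hMN]
        nlinarith
      · set Nr := (n:ℝ) with hNr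
        have hNr2 : (2:ℝ) ≤ Nr := by rw [hNr]; exact_mod_cast hn2
        have hNr0 : Nr ≠ 0 := by intro h; rw [h] at hNr2; linarith
        have hNr1 : Nr - 1 ≠ 0 := by intro h; nlinarith
        have hcast : ((n - 1 : ℕ) : ℝ) = Nr - 1 := by
          have h1 : 1 ≤ n := by omega
          rw [Nat.cast_sub h1, hNr]; norm_num
        unfold zm at hzm
        rw [hcast, show Nr - 1 + 1 = Nr from by ring] at hzm
        have e1 : (Nr - 1) * (1/(Nr - 1)) = 1 := mul_one_div_cancel hNr1
        have e2 : Nr * (1/Nr) = 1 := mul_one_div_cancel hNr0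
        have hpos : (0:ℝ) < Nr * (Nr - 1) := by nlinarith
        have h3 : Nr * (Nr - 1) * x ≤ Nr - c := by
          have h := mul_le_mul_of_nonneg_left hzm hpos.le
          have hid : Nr * (Nr - 1) * ((1:ℝ)/(Nr - 1) - c * (1/(Nr - 1)) * (1/Nr)) = Nr - c := by
            linear_combination (Nr - c) * e1 - c * ((Nr - 1) * (1/(Nr - 1))) * e2
          linarith [hid ▸ h]
        have hlt : (Nr - 1) * x < 1 := by nlinarith
        have hMN := hsame n hn2 hnx hlt
        rw [hTL, hMN]
        nlinarith
    refine ⟨⟨?_, ?_⟩, ⟨(D:ℤ) - (m * (m - 1) * k - (m - 1) * D), ?_⟩⟩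
    · unfold TA; linarith
    · unfold TA; linarith
    · unfold TA; push_cast [← hTLk]; ring
  · rw [if_neg hcond]
    push_neg at hcond
    obtain ⟨hA, hB⟩ := hcond
    have hmpos : 0 ≤ m := by omega
    have hcastM : ((m.toNat : ℕ) : ℝ) = M := by
      rw [hMdef]; exact_mod_cast congrArg (Int.cast : ℤ → ℝ) (Int.toNat_of_nonneg hmpos)
    have htn2 : 2 ≤ m.toNat := by omega
    have h1M : 1/((m.toNat : ℕ) : ℝ) ≤ x := by
      rw [hcastM, div_le_iff₀ (by linarith : (0:ℝ) < M)]
      linarith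
    have hclb : c ≤ TL x := by
      cases j with
      | false =>
        have hge : zp c m.toNat ≤ x := hA rfl m.toNat htn2 h1M
        unfold zp at hge
        rw [hcastM] at hge
        rw [show (1:ℝ)/M + c * (1/M) * (1/(M - 1)) = ((M - 1) + c)/(M * (M - 1)) by
          field_simp; try ring] at hge
        rw [div_le_iff₀ (by nlinarith : (0:ℝ) < M * (M - 1))] at hge
        rw [hTL]; nlinarith
      | true =>
        have hge : zm c (m.toNat - 1) < x := hB rfl m.toNat htn2 h1M
        have hcast : ((m.toNat - 1 : ℕ) : ℝ) = M - 1 := by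
          have h1 : 1 ≤ m.toNat := by omega
          push_cast [Nat.cast_sub h1]; rw [hcastM]
        unfold zm at hge
        rw [hcast, show M - 1 + 1 = M from by ring] at hge
        have e1 : (M - 1) * (1/(M - 1)) = 1 := mul_one_div_cancel hM1
        have e2 : M * (1/M) = 1 := mul_one_div_cancel hM0
        have hpos : (0:ℝ) < M * (M - 1) := by nlinarith
        have h3 : M - c < M * (M - 1) * x := by
          have h := mul_lt_mul_of_pos_left hge hpos
          have hid : M * (M - 1) * ((1:ℝ)/(M - 1) - c * (1/(M - 1)) * (1/M)) = M - c := by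
            linear_combination (M - c) * e1 - c * ((M - 1) * (1/(M - 1))) * e2
          linarith [hid ▸ h]
        rw [hTL]; linarith
    exact ⟨⟨hclb, le_of_lt hTL1⟩, ⟨m * (m - 1) * k - (m - 1) * D, hTLk⟩⟩

/-- for rational `c ∈ (0,1/2]` the full random orbit set of `c` and
`1 − c` is finite (so `L_c` admits a finite Markov partition). -/
theorem rational_c_orbit_finite (c : ℝ) (hcq : ∃ q : ℚ, (q : ℝ) = c)
    (hc0 : 0 < c) (hc : c ≤ 1/2) :
    Set.Finite ({y : ℝ | ∃ (ω : ℕ → Bool) (n : ℕ), Tom c ω n c = y} ∪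
      {y : ℝ | ∃ (ω : ℕ → Bool) (n : ℕ), Tom c ω n (1 - c) = y}) := by
  obtain ⟨q, hq⟩ := hcq
  set D : ℕ := q.den with hD
  have hDpos : 0 < D := q.pos
  have hden : ((q.den:ℝ)) ≠ 0 := Nat.cast_ne_zero.mpr q.den_nz
  have hDc : (D:ℝ) * c = (q.num : ℝ) := by
    rw [← hq, Rat.cast_def, hD]
    field_simp
  -- the invariant set
  set P : ℝ → Prop := fun x => x ∈ Set.Icc c 1 ∧ ∃ k : ℤ, (D:ℝ) * x = k with hP
  have horb : ∀ (x : ℝ), P x → ∀ (n : ℕ) (ω : ℕ → Bool), P (Tom c ω n x) := by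
    intro x hx n
    induction n with
    | zero => intro ω; exact hx
    | succ n ih =>
      intro ω
      have h := ih ω
      exact Tc_invar c hc0 hc D (ω n) _ h.1 h.2
  have hPc : P c := ⟨⟨le_refl c, by linarith⟩, ⟨q.num, hDc⟩⟩
  have hP1c : P (1 - c) := by
    refine ⟨⟨by linarith, by linarith⟩, ⟨(D:ℤ) - q.num, ?_⟩⟩
    push_cast
    rw [mul_sub, mul_one, hDc]
  have hsub : ({y : ℝ | ∃ (ω : ℕ → Bool) (n : ℕ), Tom c ω n c = y} ∪
      {y : ℝ | ∃ (ω : ℕ → Bool) (n : ℕ), Tom c ω n (1 - c) = y}) ⊆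
      (fun k : ℤ => (k:ℝ)/(D:ℝ)) '' (Set.Icc 0 (D:ℤ)) := by
    intro y hy
    have hPy : P y := by
      rcases hy with ⟨ω, n, hyn⟩ | ⟨ω, n, hyn⟩
      · rw [← hyn]; exact horb c hPc n ω
      · rw [← hyn]; exact horb (1 - c) hP1c n ω
    obtain ⟨⟨hyc, hy1⟩, k, hk⟩ := hPy
    have hy0 : 0 ≤ y := le_trans hc0.le hyc
    have hDR : (0:ℝ) < (D:ℝ) := by exact_mod_cast hDpos
    refine ⟨k, ⟨?_, ?_⟩, ?_⟩
    · exact_mod_cast (by rw [← hk]; positivity : (0:ℝ) ≤ (k:ℝ))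
    · have : (k:ℝ) ≤ (D:ℝ) := by rw [← hk]; nlinarith
      exact_mod_cast this
    · show (k:ℝ)/(D:ℝ) = y
      rw [div_eq_iff hDR.ne', ← hk, mul_comm]
  exact Set.Finite.subset ((Set.finite_Icc (0:ℤ) (D:ℤ)).image _) hsub
end
end

section
/- Let k ≥ 2 be an integer and c = 1/2^k. Then the set of all random orbit points of 1 − c satisfies {T_ω^n(1−c) : ω ∈ {0,1}^ℕ, n ≥ 0} = {1 − 1/2^i : 2 ≤ i ≤ k} ∪ {1/2^{i−1} : 2 ≤ i ≤ k} ∪ {1}. -/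
open MeasureTheory Filter Set
open scoped Classical ENNReal

noncomputable section

-- Auxiliary lemmas
lemma TL_of (x : ℝ) (h1 : 1/2 < x) (h2 : x < 1) : TL x = 2*x - 1 := by
  have hceil : ⌈1/x⌉ = 2 := by
    rw [Int.ceil_eq_iff]
    constructor
    · push_cast; rw [lt_div_iff₀ (by linarith)]; linarith
    · push_cast; rw [div_le_iff₀ (by linarith)]; linarith
  rw [TL, if_neg (by linarith), if_neg (by linarith), hceil]
  push_cast; ring

lemma TL_inv_pow (m : ℕ) (hm : 1 ≤ m) : TL ((1:ℝ)/2^m) = 0 := by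
  have h2 : ((1:ℝ)/2^m) < 1 := by
    rw [div_lt_one (by positivity)]
    calc (1:ℝ) < 2^1 := by norm_num
    _ ≤ 2^m := pow_le_pow_right₀ one_le_two hm
  have hceil : ⌈(1:ℝ)/((1:ℝ)/2^m)⌉ = 2^m := by
    rw [one_div_one_div,
      show ((2:ℝ)^m) = ((2^m : ℕ) : ℝ) by push_cast; ring, Int.ceil_natCast]
    push_cast; ring
  rw [TL, if_neg (by positivity), if_neg (by linarith), hceil]
  have : ((2:ℝ)^m) ≠ 0 := by positivity
  push_cast
  field_simp
  ring

lemma Tc_one (j : Bool) (c : ℝ) (hc : c ≠ 0) : Tc j c 1 = 1 := by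
  rw [Tc, if_neg (fun h => hc h.1), if_pos rfl]

lemma no_false_cond (c x : ℝ) (hc0 : 0 < c) (hc4 : c ≤ 1/4) (hx : 3/4 ≤ x) :
    ¬ ∃ n : ℕ, 2 ≤ n ∧ 1/(n:ℝ) ≤ x ∧ x < zp c n := by
  rintro ⟨n, hn, -, hlt⟩
  have hn' : (2:ℝ) ≤ n := by exact_mod_cast hn
  have h1 : (1:ℝ)/(n:ℝ) ≤ 1/2 := by
    apply one_div_le_one_div_of_le <;> linarith
  have h2 : (1:ℝ)/((n:ℝ)-1) ≤ 1 := by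
    rw [div_le_one (by linarith)]; linarith
  have h3 : 0 < (1:ℝ)/(n:ℝ) := by
    apply div_pos one_pos; linarith
  have h4 : 0 < (1:ℝ)/((n:ℝ)-1) := by
    apply div_pos one_pos; linarith
  rw [zp] at hlt
  have key : c * (1/(n:ℝ)) * (1/((n:ℝ)-1)) ≤ (1/4) * (1/2) * 1 := by
    apply mul_le_mul (mul_le_mul hc4 h1 h3.le (by norm_num)) h2 h4.le (by norm_num)
  linarith

lemma pow_bound (i : ℕ) (hi : 2 ≤ i) : (1:ℝ)/2^i ≤ 1/4 := by
  apply one_div_le_one_div_of_le (by norm_num)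
  calc (4:ℝ) = 2^2 := by norm_num
  _ ≤ 2^i := pow_le_pow_right₀ one_le_two hi

lemma Tc_false_top (c : ℝ) (hc0 : 0 < c) (hc4 : c ≤ 1/4) (i : ℕ) (hi : 2 ≤ i) :
    Tc false c (1 - 1/2^i) = 1 - 1/2^(i-1) := by
  have hip : (1:ℝ)/2^i ≤ 1/4 := pow_bound i hi
  have hipos : (0:ℝ) < 1/2^i := by positivity
  have hx1 : (1:ℝ) - 1/2^i ≠ 1 := by intro h; nlinarith
  rw [Tc, if_neg (fun h => hc0.ne' h.1), if_neg hx1, if_neg, TL_of _ (by linarith) (by linarith)]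
  · have hpow : (2:ℝ)^i = 2 * 2^(i-1) := by
      rw [← pow_succ']
      congr 1
      omega
    rw [hpow]
    field_simp
    ring
  · rintro (⟨-, hex⟩ | ⟨h, -⟩)
    · exact no_false_cond c _ hc0 hc4 (by linarith) hex
    · simp at h

lemma Tc_true_top (c : ℝ) (hc0 : 0 < c) (hc4 : c ≤ 1/4) (i : ℕ) (hi : 2 ≤ i)
    (hcx : c ≤ 1/2^i) :
    Tc true c (1 - 1/2^i) = 1/2^(i-1) := by
  have hip : (1:ℝ)/2^i ≤ 1/4 := pow_bound i hi
  have hipos : (0:ℝ) < 1/2^i := by positivity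
  have hx1 : (1:ℝ) - 1/2^i ≠ 1 := by intro h; nlinarith
  rw [Tc, if_neg (fun h => hc0.ne' h.1), if_neg hx1, if_pos, TA,
    TL_of _ (by linarith) (by linarith)]
  · have hpow : (2:ℝ)^i = 2 * 2^(i-1) := by
      rw [← pow_succ']; congr 1; omega
    rw [hpow]; field_simp; ring
  · refine Or.inr ⟨rfl, 2, le_refl 2, ?_, ?_⟩
    · push_cast; linarith
    · rw [show (2:ℕ) - 1 = 1 from rfl, zm]
      push_cast
      linarith

lemma Tc_mid (j : Bool) (c : ℝ) (hc0 : 0 < c) (hc4 : c ≤ 1/4) (m : ℕ) (hm : 1 ≤ m) :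
    Tc j c (1/2^m) = 1 := by
  have h2m : (2:ℝ) ≤ 2^m := by
    calc (2:ℝ) = 2^1 := by norm_num
    _ ≤ 2^m := pow_le_pow_right₀ one_le_two hm
  have hpos : (0:ℝ) < 2^m := by positivity
  have hx1 : (1:ℝ)/2^m ≠ 1 := ne_of_lt (by rw [div_lt_one hpos]; linarith)
  have hcast : ((2^m : ℕ) : ℝ) = 2^m := by push_cast; ring
  have hcast1 : ((2^m - 1 : ℕ) : ℝ) = 2^m - 1 := by
    have : 1 ≤ 2^m := Nat.one_le_two_pow
    push_cast [Nat.cast_sub this]; ring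
  have hn2 : 2 ≤ 2^m := by
    calc 2 = 2^1 := rfl
    _ ≤ 2^m := Nat.pow_le_pow_right (by norm_num) hm
  rw [Tc, if_neg (fun h => hc0.ne' h.1), if_neg hx1, if_pos, TA, TL_inv_pow m hm]
  · norm_num
  cases j with
  | false =>
    refine Or.inl ⟨rfl, 2^m, hn2, by rw [hcast], ?_⟩
    rw [zp, hcast]
    have : 0 < c * (1/(2:ℝ)^m) * (1/((2:ℝ)^m - 1)) := by
      apply mul_pos (mul_pos hc0 (by positivity))
      apply div_pos one_pos; linarith
    linarith
  | true =>
    refine Or.inr ⟨rfl, 2^m, hn2, by rw [hcast], ?_⟩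
    rw [zm, hcast1]
    have he : (2:ℝ)^m - 1 + 1 = 2^m := by ring
    rw [he]
    have hN1 : (0:ℝ) < 2^m - 1 := by linarith
    have hba : 1/((2:ℝ)^m-1) - 1/2^m = (1/2^m)*(1/((2:ℝ)^m-1)) := by
      field_simp
      ring
    have hprod : (0:ℝ) < (1/2^m)*(1/((2:ℝ)^m-1)) :=
      mul_pos (div_pos one_pos hpos) (div_pos one_pos hN1)
    nlinarith [hprod, mul_nonneg (by linarith : (0:ℝ) ≤ 1 - c) hprod.le]

lemma Tom_congr (c : ℝ) (ω ω' : ℕ → Bool) (x : ℝ) (n : ℕ)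
    (h : ∀ m, m < n → ω m = ω' m) : Tom c ω n x = Tom c ω' n x := by
  induction n with
  | zero => rfl
  | succ n ih =>
    show Tc (ω n) c (Tom c ω n x) = Tc (ω' n) c (Tom c ω' n x)
    rw [ih (fun m hm => h m (by omega)), h n (by omega)]

/-- for `c = 1/2^k`, `k ≥ 2`, the set of random orbit points of `1 − c`. -/
theorem orbit_of_one_sub_c_for_power_of_two (k : ℕ) (hk : 2 ≤ k)
    (c : ℝ) (hc : c = 1 / 2 ^ k) :
    {y : ℝ | ∃ (ω : ℕ → Bool) (n : ℕ), Tom c ω n (1 - c) = y}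
      = {y : ℝ | ∃ i : ℕ, 2 ≤ i ∧ i ≤ k ∧ y = 1 - 1 / 2 ^ i}
        ∪ {y : ℝ | ∃ i : ℕ, 2 ≤ i ∧ i ≤ k ∧ y = 1 / 2 ^ (i - 1)}
        ∪ {1} := by
  subst hc
  have hc0 : (0:ℝ) < 1/2^k := by positivity
  have hc4 : (1:ℝ)/2^k ≤ 1/4 := pow_bound k hk
  have hcx : ∀ i, i ≤ k → (1:ℝ)/2^k ≤ 1/2^i := fun i hi =>
    one_div_le_one_div_of_le (by positivity) (pow_le_pow_right₀ one_le_two hi)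
  have step : ∀ (j : Bool) (y : ℝ),
      ((∃ i, 2 ≤ i ∧ i ≤ k ∧ y = 1 - 1/2^i) ∨
        (∃ i, 2 ≤ i ∧ i ≤ k ∧ y = 1/2^(i-1)) ∨ y = 1) →
      ((∃ i, 2 ≤ i ∧ i ≤ k ∧ Tc j (1/2^k) y = 1 - 1/2^i) ∨
        (∃ i, 2 ≤ i ∧ i ≤ k ∧ Tc j (1/2^k) y = 1/2^(i-1)) ∨ Tc j (1/2^k) y = 1) := by
    rintro j y (⟨i,hi2,hik,rfl⟩|⟨i,hi2,hik,rfl⟩|rfl)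
    · cases j with
      | false =>
        rw [Tc_false_top _ hc0 hc4 i hi2]
        rcases Nat.lt_or_ge 2 i with h|h
        · exact Or.inl ⟨i-1, by omega, by omega, rfl⟩
        · have hi2' : i = 2 := by omega
          subst hi2'
          exact Or.inr (Or.inl ⟨2, le_refl _, hk, by norm_num⟩)
      | true =>
        rw [Tc_true_top _ hc0 hc4 i hi2 (hcx i hik)]
        exact Or.inr (Or.inl ⟨i, hi2, hik, rfl⟩)
    · rw [Tc_mid j _ hc0 hc4 (i-1) (by omega)]
      exact Or.inr (Or.inr rfl)
    · rw [Tc_one j _ hc0.ne']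
      exact Or.inr (Or.inr rfl)
  have desc : ∀ t, t ≤ k - 2 →
      Tom (1/2^k) (fun _ => false) t (1 - 1/2^k) = 1 - 1/2^(k-t) := by
    intro t
    induction t with
    | zero => intro _; rfl
    | succ t ih =>
      intro ht
      show Tc false _ (Tom _ _ t _) = _
      rw [ih (by omega), Tc_false_top _ hc0 hc4 (k-t) (by omega)]
      have : k - t - 1 = k - (t+1) := by omega
      rw [this]
  ext y
  simp only [Set.mem_setOf_eq, Set.mem_union, Set.mem_singleton_iff]
  constructor
  · rintro ⟨ω, n, rfl⟩
    have key : ∀ n, (∃ i, 2 ≤ i ∧ i ≤ k ∧ Tom (1/2^k) ω n (1 - 1/2^k) = 1 - 1/2^i) ∨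
        (∃ i, 2 ≤ i ∧ i ≤ k ∧ Tom (1/2^k) ω n (1 - 1/2^k) = 1/2^(i-1)) ∨
        Tom (1/2^k) ω n (1 - 1/2^k) = 1 := by
      intro n
      induction n with
      | zero => exact Or.inl ⟨k, hk, le_refl k, rfl⟩
      | succ n ih => exact step (ω n) _ ih
    rcases key n with h|h|h
    exacts [Or.inl (Or.inl h), Or.inl (Or.inr h), Or.inr h]
  · rintro ((⟨i,hi2,hik,rfl⟩|⟨i,hi2,hik,rfl⟩)|rfl)
    · exact ⟨fun _ => false, k - i, by
        rw [desc (k-i) (by omega)]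
        have : k - (k - i) = i := by omega
        rw [this]⟩
    · refine ⟨fun m => decide (k - i ≤ m), k - i + 1, ?_⟩
      have h1 : Tom (1/2^k) (fun m => decide (k - i ≤ m)) (k-i) (1 - 1/2^k)
          = 1 - 1/2^i := by
        rw [Tom_congr _ _ (fun _ => false) _ (k-i)
          (fun m hm => by simp; omega)]
        rw [desc (k-i) (by omega)]
        have : k - (k - i) = i := by omega
        rw [this]
      show Tc _ _ (Tom _ _ (k-i) _) = _
      have hb : (fun m => decide (k - i ≤ m)) (k - i) = true := by simp
      rw [h1, hb]
      exact Tc_true_top _ hc0 hc4 i hi2 (hcx i hik)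
    · refine ⟨fun _ => true, 2, ?_⟩
      show Tc true _ (Tc true _ (Tom _ _ 0 _)) = 1
      show Tc true _ (Tc true _ (1 - 1/2^k)) = 1
      rw [Tc_true_top _ hc0 hc4 k hk (le_refl _), Tc_mid true _ hc0 hc4 (k-1) (by omega)]
end
end
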